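/- Let p_ρ > 0, ρ > 0, h₁ ≠ 0 and β ≠ 0 be real numbers. The 5×5 real matrix 𝒜 = [[0, 0, 1, 0, 0], [0, 0, 0, 0, −h₁], [p_ρ, 0, 0, 0, 0], [0, 0, h₁/ρ, 0, β], [0, 0, 0, 0, 0]] has characteristic polynomial X³(X² − p_ρ), its eigenvalue 0 has algebraic multiplicity 3 but geometric multiplicity 2 (its kernel is the span of e₂ and e₄), and consequently 𝒜 is not diagonalizable over ℂ. -/

import Mathlib

open Polynomial

set_option maxHeartbeats 1000000 in
/-- Final assertion of Proposition 2.10 ('betahyp'): the transverse Fourier symbol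
`𝒜(0,1)` of the linearized inviscid MHD β-model about a parallel state (with `ū = 0`) has
characteristic polynomial `X³(X² − p_ρ)`, its eigenvalue `0` has algebraic multiplicity `3`
but geometric multiplicity `2` (kernel spanned by `e₂` and `e₄`), and consequently the matrix
is not diagonalizable over `ℂ`. -/
theorem betaModel_transverse_symbol_not_diagonalizable
    (pρ ρ h₁ β : ℝ) (hpρ : 0 < pρ) (hρ : 0 < ρ) (hh₁ : h₁ ≠ 0) (hβ : β ≠ 0) :
    (Matrix.charpoly
        (!![0, 0, 1, 0, 0;
            0, 0, 0, 0, -h₁;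
            pρ, 0, 0, 0, 0;
            0, 0, h₁ / ρ, 0, β;
            0, 0, 0, 0, 0] : Matrix (Fin 5) (Fin 5) ℝ)
      = X ^ 3 * (X ^ 2 - C pρ)) ∧
    (Polynomial.rootMultiplicity (0 : ℝ)
        (Matrix.charpoly
          (!![0, 0, 1, 0, 0;
              0, 0, 0, 0, -h₁;
              pρ, 0, 0, 0, 0;
              0, 0, h₁ / ρ, 0, β;
              0, 0, 0, 0, 0] : Matrix (Fin 5) (Fin 5) ℝ)) = 3) ∧
    (LinearMap.ker
        (Matrix.mulVecLin
          (!![0, 0, 1, 0, 0;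
              0, 0, 0, 0, -h₁;
              pρ, 0, 0, 0, 0;
              0, 0, h₁ / ρ, 0, β;
              0, 0, 0, 0, 0] : Matrix (Fin 5) (Fin 5) ℝ))
      = Submodule.span ℝ {(Pi.single 1 1 : Fin 5 → ℝ), (Pi.single 3 1 : Fin 5 → ℝ)}) ∧
    (Module.finrank ℝ
        (LinearMap.ker
          (Matrix.mulVecLin
            (!![0, 0, 1, 0, 0;
                0, 0, 0, 0, -h₁;
                pρ, 0, 0, 0, 0;
                0, 0, h₁ / ρ, 0, β;
                0, 0, 0, 0, 0] : Matrix (Fin 5) (Fin 5) ℝ))) = 2) ∧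
    ¬ ((⨆ μ : ℂ, Module.End.eigenspace
          (Matrix.mulVecLin
            ((!![0, 0, 1, 0, 0;
                0, 0, 0, 0, -h₁;
                pρ, 0, 0, 0, 0;
                0, 0, h₁ / ρ, 0, β;
                0, 0, 0, 0, 0] : Matrix (Fin 5) (Fin 5) ℝ).map (algebraMap ℝ ℂ))) μ) = ⊤) := by
  set A : Matrix (Fin 5) (Fin 5) ℝ :=
    !![0, 0, 1, 0, 0;
       0, 0, 0, 0, -h₁;
       pρ, 0, 0, 0, 0;
       0, 0, h₁ / ρ, 0, β;
       0, 0, 0, 0, 0] with hA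
  -- Part 1: the characteristic polynomial
  have hchar : Matrix.charpoly A = X ^ 3 * (X ^ 2 - C pρ) := by
    have hcm : Matrix.charmatrix A =
        !![X, 0, -C 1, 0, 0;
           0, X, 0, 0, C h₁;
           -C pρ, 0, X, 0, 0;
           0, 0, -C (h₁/ρ), X, -C β;
           0, 0, 0, 0, X] := by
      ext i j
      fin_cases i <;> fin_cases j <;>
        simp [hA, Matrix.charmatrix_apply_eq, Matrix.charmatrix_apply_ne,
          Matrix.vecHead, Matrix.vecTail]
    rw [Matrix.charpoly, hcm]
    simp [Matrix.det_succ_row_zero, Fin.sum_univ_succ, Fin.succAbove,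
      Matrix.vecHead, Matrix.vecTail]
    ring
  refine ⟨hchar, ?_, ?_, ?_, ?_⟩
  -- Part 2: root multiplicity of 0 is 3
  · rw [hchar]
    have h1 : (X ^ 3 : ℝ[X]) = (X - C (0 : ℝ)) ^ 3 := by simp
    have h2 : ((X : ℝ[X]) ^ 2 - C pρ) ≠ 0 := by
      intro h
      have := congrArg (Polynomial.eval (0 : ℝ)) h
      simp at this
      exact absurd this.symm (ne_of_lt hpρ)
    have hne : (X ^ 3 * (X ^ 2 - C pρ) : ℝ[X]) ≠ 0 :=
      mul_ne_zero (pow_ne_zero _ X_ne_zero) h2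
    have hroot : ¬ Polynomial.IsRoot ((X : ℝ[X]) ^ 2 - C pρ) 0 := by
      simp [Polynomial.IsRoot]
      exact hpρ.ne'
    rw [Polynomial.rootMultiplicity_mul hne, h1, Polynomial.rootMultiplicity_X_sub_C_pow,
      Polynomial.rootMultiplicity_eq_zero hroot]
  -- Part 3: the kernel
  · apply le_antisymm
    · intro x hx
      rw [LinearMap.mem_ker] at hx
      have h0 := congrFun hx 0
      have h1 := congrFun hx 1
      have h2 := congrFun hx 2
      simp [hA, Matrix.mulVecLin_apply, Matrix.mulVec, dotProduct,
        Fin.sum_univ_five] at h0 h1 h2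
      have hx2 : x 2 = 0 := h0
      have hx4 : x 4 = 0 := by
        rcases h1 with h | h
        · exact absurd h hh₁
        · exact h
      have hx0 : x 0 = 0 := by
        rcases h2 with h | h
        · exact absurd h (ne_of_gt hpρ)
        · exact h
      rw [Submodule.mem_span_pair]
      refine ⟨x 1, x 3, ?_⟩
      funext i
      fin_cases i <;> simp [Pi.single_apply, hx0, hx2, hx4]
    · rw [Submodule.span_le]
      rintro y (rfl | rfl) <;>
      · rw [SetLike.mem_coe, LinearMap.mem_ker]
        funext i
        fin_cases i <;>
          simp [hA, Matrix.mulVecLin_apply, Matrix.mulVec, dotProduct,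
            Fin.sum_univ_five, Pi.single_apply]
  -- Part 4: dimension of the kernel
  · have hker : LinearMap.ker (Matrix.mulVecLin A)
        = Submodule.span ℝ {(Pi.single 1 1 : Fin 5 → ℝ), (Pi.single 3 1 : Fin 5 → ℝ)} := by
      apply le_antisymm
      · intro x hx
        rw [LinearMap.mem_ker] at hx
        have h0 := congrFun hx 0
        have h1 := congrFun hx 1
        have h2 := congrFun hx 2
        simp [hA, Matrix.mulVecLin_apply, Matrix.mulVec, dotProduct,
          Fin.sum_univ_five] at h0 h1 h2
        have hx2 : x 2 = 0 := h0
        have hx4 : x 4 = 0 := by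
          rcases h1 with h | h
          · exact absurd h hh₁
          · exact h
        have hx0 : x 0 = 0 := by
          rcases h2 with h | h
          · exact absurd h (ne_of_gt hpρ)
          · exact h
        rw [Submodule.mem_span_pair]
        refine ⟨x 1, x 3, ?_⟩
        funext i
        fin_cases i <;> simp [Pi.single_apply, hx0, hx2, hx4]
      · rw [Submodule.span_le]
        rintro y (rfl | rfl) <;>
        · rw [SetLike.mem_coe, LinearMap.mem_ker]
          funext i
          fin_cases i <;>
            simp [hA, Matrix.mulVecLin_apply, Matrix.mulVec, dotProduct,
              Fin.sum_univ_five, Pi.single_apply]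
    rw [hker]
    have hrange : ({(Pi.single 1 1 : Fin 5 → ℝ), (Pi.single 3 1 : Fin 5 → ℝ)} : Set (Fin 5 → ℝ))
        = Set.range ![(Pi.single 1 1 : Fin 5 → ℝ), (Pi.single 3 1 : Fin 5 → ℝ)] := by
      ext y
      simp [Matrix.range_cons, Matrix.range_empty]
      clear * - y
      tauto
    rw [hrange]
    have hli : LinearIndependent ℝ ![(Pi.single 1 1 : Fin 5 → ℝ), (Pi.single 3 1 : Fin 5 → ℝ)] := by
      rw [LinearIndependent.pair_iff]
      intro s t hst
      constructor
      · have := congrFun hst 1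
        simpa [Pi.single_apply] using this
      · have := congrFun hst 3
        simpa [Pi.single_apply] using this
    rw [finrank_span_eq_card hli]
    simp
  -- Part 5: not diagonalizable over ℂ
  · intro htop
    set B : Matrix (Fin 5) (Fin 5) ℂ := A.map (algebraMap ℝ ℂ) with hB
    -- every eigenvector has vanishing 4th component
    have hkey : ∀ μ : ℂ, Module.End.eigenspace (Matrix.mulVecLin B) μ
        ≤ LinearMap.ker (LinearMap.proj (R := ℂ) (φ := fun _ : Fin 5 => ℂ) 4) := by
      intro μ x hx
      rw [Module.End.mem_eigenspace_iff] at hx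
      have h1 := congrFun hx 1
      have h4 := congrFun hx 4
      simp [hB, hA, Matrix.mulVecLin_apply, Matrix.mulVec, dotProduct,
        Fin.sum_univ_five, Matrix.map_apply] at h1 h4
      rw [LinearMap.mem_ker, LinearMap.proj_apply]
      by_cases hμ : μ = 0
      · -- from row 1: -h₁ x 4 = μ * x 1 = 0
        rw [hμ] at h1
        simp at h1
        rcases h1 with h | h
        · exact absurd h hh₁
        · exact h
      · -- from row 4: 0 = μ * x 4
        rcases h4 with h | h
        · exact absurd h hμ
        · exact h
    have hle : (⨆ μ : ℂ, Module.End.eigenspace (Matrix.mulVecLin B) μ)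
        ≤ LinearMap.ker (LinearMap.proj (R := ℂ) (φ := fun _ : Fin 5 => ℂ) 4) :=
      iSup_le hkey
    rw [htop, top_le_iff] at hle
    have : (Pi.single 4 1 : Fin 5 → ℂ) ∈
        LinearMap.ker (LinearMap.proj (R := ℂ) (φ := fun _ : Fin 5 => ℂ) 4) := by
      rw [hle]; trivial
    rw [LinearMap.mem_ker, LinearMap.proj_apply] at this
    simp at this
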